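/- Let D be a dense open subset of the Hechler partial order 𝐃, and let R ⊆ Seq* be the smallest set satisfying: (i) s ∈ R whenever there exists a strictly increasing f : ω → ω extending s with (s,f) ∈ D; (ii) s ∈ R whenever there exist m ∈ ω and a sequence ⟨s_k : k ∈ ω⟩ of elements of Seq* of length m such that for every k, s ⊆ s_k, s_k(|s|) > k, and s_k ∈ R. Then R = Seq*; that is, the rank rank_D(s) is defined for every s ∈ Seq*. -/

import Mathlib

/-- `Seq*`: strictly increasing finite sequences of natural numbers. -/
def SeqStar : Set (List ℕ) := {s | s.Chain' (· < ·)}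

/-- The Hechler forcing `𝐃`: pairs `(s, f)` with `s ∈ Seq*`, `f` strictly
increasing, and `s ⊆ f`. -/
def HechlerD : Set (List ℕ × (ℕ → ℕ)) :=
  {p | p.1 ∈ SeqStar ∧ StrictMono p.2 ∧ ∀ i, (h : i < p.1.length) → p.1.get ⟨i, h⟩ = p.2 i}

/-- `HechlerExt p q` means `q ≥ p`, i.e. `q` extends `p`: `q.1 ⊇ p.1` (end
extension) and `q.2 n ≥ p.2 n` for all `n`. -/
def HechlerExt (p q : List ℕ × (ℕ → ℕ)) : Prop :=
  p.1 <+: q.1 ∧ ∀ n, p.2 n ≤ q.2 n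

private lemma mem_le_foldr (l : List ℕ) : ∀ x ∈ l, x ≤ l.foldr max 0 := by
  induction l with
  | nil => simp
  | cons a l ih =>
    intro x hx
    rcases List.mem_cons.mp hx with h | h
    · subst h; exact le_max_left _ _
    · exact (ih x h).trans (le_max_right _ _)

private noncomputable def KfunAux (R : Set (List ℕ)) (t : List ℕ) (m : ℕ) : ℕ :=
  sInf {K : ℕ | ∀ u ∈ R, u.length = m → t <+: u → u.getD t.length 0 ≤ K}

private lemma Kspec {R : Set (List ℕ)} (hRsub : R ⊆ SeqStar)
    (h2 : ∀ s ∈ SeqStar,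
      (∃ m : ℕ, s.length < m ∧ ∃ sk : ℕ → List ℕ, ∀ k : ℕ,
        sk k ∈ SeqStar ∧ (sk k).length = m ∧ s <+: sk k ∧
        k < (sk k).getD s.length 0 ∧ sk k ∈ R) → s ∈ R)
    {t : List ℕ} (ht : t ∈ SeqStar) (htR : t ∉ R) {m : ℕ} (hm : t.length < m) :
    ∀ u ∈ R, u.length = m → t <+: u → u.getD t.length 0 ≤ KfunAux R t m := by
  have hne : {K : ℕ | ∀ u ∈ R, u.length = m → t <+: u → u.getD t.length 0 ≤ K}.Nonempty := by
    by_contra hcon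
    have hall : ∀ K : ℕ, ∃ u, u ∈ R ∧ u.length = m ∧ t <+: u ∧ K < u.getD t.length 0 := by
      intro K
      by_contra hK
      push_neg at hK
      exact hcon ⟨K, fun u hu hlen hpre => hK u hu hlen hpre⟩
    choose u hu1 hu2 hu3 hu4 using hall
    exact htR (h2 t ht ⟨m, hm, u, fun k => ⟨hRsub (hu1 k), hu2 k, hu3 k, hu4 k, hu1 k⟩⟩)
  exact Nat.sInf_mem hne

private noncomputable def cand (n B : ℕ) : Finset (List ℕ) :=
  (Finset.univ : Finset (Fin n → Fin (B + 1))).image (fun v => List.ofFn (fun i => (v i : ℕ)))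

private lemma mem_cand {t : List ℕ} {n B : ℕ} (hlen : t.length = n)
    (hB : ∀ x ∈ t, x ≤ B) : t ∈ cand n B := by
  refine Finset.mem_image.2 ⟨fun i => ⟨t.get (Fin.cast hlen.symm i),
    Nat.lt_succ_of_le (hB _ (t.get_mem _))⟩, Finset.mem_univ _, ?_⟩
  apply List.ext_get (by simp [hlen])
  intro i h1 h2
  simp [List.get_ofFn]

private noncomputable def cfun (R : Set (List ℕ)) (s : List ℕ) (m : ℕ) : ℕ → ℕ
  | 0 => max (s.foldr max 0) (KfunAux R s m)
  | d + 1 => max (cfun R s m d)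
      ((cand (s.length + d + 1) (cfun R s m d)).sup (fun t => KfunAux R t m))

private lemma cfun_mono (R : Set (List ℕ)) (s : List ℕ) (m : ℕ) :
    Monotone (cfun R s m) := by
  apply monotone_nat_of_le_succ
  intro d
  exact le_max_left _ _

private noncomputable def phi (R : Set (List ℕ)) (s : List ℕ) : ℕ → ℕ
  | 0 => max (s.foldr max 0) (cfun R s (s.length + 1) 0) + 1
  | d + 1 => max (phi R s d) (cfun R s (s.length + d + 2) (d + 1)) + 1

private noncomputable def ffun (R : Set (List ℕ)) (s : List ℕ) (n : ℕ) : ℕ :=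
  if h : n < s.length then s.getD n 0 else phi R s (n - s.length)

private lemma ffun_ext (R : Set (List ℕ)) (s : List ℕ) {i : ℕ} (h : i < s.length) :
    ffun R s i = s.get ⟨i, h⟩ := by
  rw [ffun, dif_pos h, List.getD_eq_get s 0 ⟨i, h⟩]

private lemma ffun_strictMono {R : Set (List ℕ)} {s : List ℕ} (hs : s ∈ SeqStar) :
    StrictMono (ffun R s) := by
  apply strictMono_nat_of_lt_succ
  intro n
  by_cases h1 : n + 1 < s.length
  · have h0 : n < s.length := by omega
    rw [ffun_ext R s h0, ffun_ext R s h1]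
    have := List.isChain_iff_getElem.mp hs n (by omega)
    exact this
  · by_cases h0 : n < s.length
    · rw [ffun_ext R s h0, ffun, dif_neg h1]
      have hm : n + 1 - s.length = 0 := by omega
      rw [hm, phi]
      have : s.get ⟨n, h0⟩ ≤ s.foldr max 0 := mem_le_foldr s _ (s.get_mem _)
      omega
    · rw [ffun, ffun, dif_neg h0, dif_neg h1]
      have hm : n + 1 - s.length = (n - s.length) + 1 := by omega
      rw [hm, phi]
      exact Nat.lt_succ_of_le (le_max_left _ _)

private lemma ffun_gt (R : Set (List ℕ)) (s : List ℕ) (n : ℕ) (h : s.length ≤ n) :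
    cfun R s (n + 1) (n - s.length) < ffun R s n := by
  rw [ffun, dif_neg (by omega)]
  obtain ⟨d, rfl⟩ : ∃ d, n = s.length + d := ⟨n - s.length, by omega⟩
  have hd : s.length + d - s.length = d := by omega
  rw [hd]
  cases d with
  | zero =>
    rw [phi]
    have : cfun R s (s.length + 0 + 1) 0 ≤ max (s.foldr max 0) (cfun R s (s.length + 1) 0) := by
      simpa using le_max_right _ _
    omega
  | succ d =>
    rw [phi]
    have he : s.length + (d + 1) + 1 = s.length + d + 2 := by omega
    rw [he]
    have : cfun R s (s.length + d + 2) (d + 1) ≤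
        max (phi R s d) (cfun R s (s.length + d + 2) (d + 1)) := le_max_right _ _
    omega

/-- If `D ⊆ 𝐃` is dense open and `R ⊆ Seq*` is closed under the two rank-forming
rules — (i) `s ∈ R` whenever some strictly increasing `f ⊇ s` gives `(s,f) ∈ D`;
(ii) `s ∈ R` whenever there are `m > |s|` and sequences `s_k ∈ Seq* ∩ ω^m` with
`s ⊆ s_k`, `s_k(|s|) > k` and `s_k ∈ R` for all `k` — then `R = Seq*`.
That is, `rank_D(s)` is defined for every `s ∈ Seq*`. -/
theorem rank_defined (D : Set (List ℕ × (ℕ → ℕ))) (hDsub : D ⊆ HechlerD)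
    (hdense : ∀ p ∈ HechlerD, ∃ q ∈ D, HechlerExt p q)
    (hopen : ∀ p ∈ D, ∀ q ∈ HechlerD, HechlerExt p q → q ∈ D)
    (R : Set (List ℕ)) (hRsub : R ⊆ SeqStar)
    (h1 : ∀ s ∈ SeqStar, (∃ f : ℕ → ℕ, (s, f) ∈ HechlerD ∧ (s, f) ∈ D) → s ∈ R)
    (h2 : ∀ s ∈ SeqStar,
      (∃ m : ℕ, s.length < m ∧ ∃ sk : ℕ → List ℕ, ∀ k : ℕ,
        sk k ∈ SeqStar ∧ (sk k).length = m ∧ s <+: sk k ∧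
        k < (sk k).getD s.length 0 ∧ sk k ∈ R) → s ∈ R) :
    R = SeqStar := by
  apply Set.Subset.antisymm hRsub
  intro s₀ hs₀
  by_contra hbad
  classical
  set f := ffun R s₀ with hf
  have hfmono : StrictMono f := ffun_strictMono hs₀
  have hcond : (s₀, f) ∈ HechlerD :=
    ⟨hs₀, hfmono, fun i h => (ffun_ext R s₀ h).symm⟩
  obtain ⟨⟨t, g⟩, hqD, hpre, hdom⟩ := hdense (s₀, f) hcond
  obtain ⟨htSS, hgmono, htg⟩ := hDsub hqD
  have htR : t ∈ R := h1 t htSS ⟨g, hDsub hqD, hqD⟩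
  -- prefixes of g
  set p : ℕ → List ℕ := fun j => (List.range j).map g with hp
  have hplen : ∀ j, (p j).length = j := by intro j; simp [hp]
  have hpget : ∀ j i (h : i < (p j).length), (p j).get ⟨i, h⟩ = g i := by
    intro j i h
    simp [hp]
  have hpSS : ∀ j, p j ∈ SeqStar := by
    intro j
    rw [SeqStar, Set.mem_setOf_eq, List.Chain', List.isChain_iff_getElem]
    intro i hi
    show (p j).get ⟨i, by omega⟩ < (p j).get ⟨i + 1, hi⟩
    rw [hpget, hpget]
    exact hgmono (Nat.lt_succ_self i)
  have hppre : ∀ {j j' : ℕ}, j ≤ j' → p j <+: p j' := by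
    intro j j' hj
    have : p j = (p j').take j := by
      simp [hp, ← List.map_take, List.take_range, Nat.min_eq_left hj]
    rw [this]
    exact List.take_prefix _ _
  have hs0get : ∀ i (h : i < s₀.length), s₀.get ⟨i, h⟩ = g i := by
    intro i h
    have h2i : i < t.length := lt_of_lt_of_le h hpre.length_le
    calc s₀.get ⟨i, h⟩ = t.get ⟨i, h2i⟩ := List.IsPrefix.getElem hpre h
      _ = g i := htg i h2i
  have hps0 : p s₀.length = s₀ := by
    apply List.ext_get (by rw [hplen])
    intro i h1' h2'
    rw [hpget, hs0get i h2']
  have hpt : p t.length = t := by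
    apply List.ext_get (by rw [hplen])
    intro i h1' h2'
    rw [hpget, htg i h2']
  have hlt : s₀.length < t.length := by
    rcases lt_or_eq_of_le hpre.length_le with h | h
    · exact h
    · have h' : s₀ = t := hpre.eq_of_length h
      exact absurd (by rw [h']; exact htR) hbad
  have hex : ∃ j, s₀.length < j ∧ p j ∈ R := ⟨t.length, hlt, by rw [hpt]; exact htR⟩
  set j₀ := Nat.find hex with hj₀
  obtain ⟨hj₀gt, hj₀R⟩ := Nat.find_spec hex
  have hj₀min : ∀ j, s₀.length ≤ j → j < j₀ → p j ∉ R := by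
    intro j hj1 hj2 hjR
    rcases eq_or_lt_of_le hj1 with h | h
    · exact hbad (by rwa [← h, hps0] at hjR)
    · exact (Nat.find_min hex hj2) ⟨h, hjR⟩
  have hgetD : ∀ j, j < j₀ → (p j₀).getD j 0 = g j := by
    intro j hj
    have hl : j < (p j₀).length := by rw [hplen]; exact hj
    rw [List.getD_eq_get _ 0 ⟨j, hl⟩, hpget]
  have hKb : ∀ j, s₀.length ≤ j → j < j₀ → g j ≤ KfunAux R (p j) j₀ := by
    intro j hge hltj
    have hb := Kspec hRsub h2 (hpSS j) (hj₀min j hge hltj)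
      (m := j₀) (by rw [hplen]; exact hltj) (p j₀) hj₀R (hplen j₀) (hppre (le_of_lt hltj))
    rw [hplen, hgetD j hltj] at hb
    exact hb
  have main : ∀ j, j < j₀ → s₀.length ≤ j → g j ≤ cfun R s₀ j₀ (j - s₀.length) := by
    intro j
    induction j using Nat.strong_induction_on with
    | _ j ih =>
      intro hjlt hjge
      rcases eq_or_lt_of_le hjge with heq | hgt
      · have h0 : j - s₀.length = 0 := by omega
        rw [h0]
        calc g j ≤ KfunAux R (p j) j₀ := hKb j hjge hjlt
          _ = KfunAux R s₀ j₀ := by rw [← heq, hps0]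
          _ ≤ cfun R s₀ j₀ 0 := by rw [cfun]; exact le_max_right _ _
      · obtain ⟨d, hd⟩ : ∃ d, j = s₀.length + d + 1 := ⟨j - s₀.length - 1, by omega⟩
        have hcandmem : p j ∈ cand (s₀.length + d + 1) (cfun R s₀ j₀ d) := by
          apply mem_cand (by rw [hplen, hd])
          intro x hx
          rw [List.mem_iff_get] at hx
          obtain ⟨⟨i, hi⟩, rfl⟩ := hx
          rw [hpget]
          rw [hplen] at hi
          by_cases hcase : i < s₀.length
          · calc g i = s₀.get ⟨i, hcase⟩ := (hs0get i hcase).symm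
              _ ≤ s₀.foldr max 0 := mem_le_foldr s₀ _ (s₀.get_mem _)
              _ ≤ cfun R s₀ j₀ 0 := by rw [cfun]; exact le_max_left _ _
              _ ≤ cfun R s₀ j₀ d := cfun_mono R s₀ j₀ (Nat.zero_le d)
          · have h5 := ih i (by omega) (by omega) (by omega)
            exact h5.trans (cfun_mono R s₀ j₀ (by omega))
        have hK2 : KfunAux R (p j) j₀ ≤ cfun R s₀ j₀ (d + 1) := by
          calc KfunAux R (p j) j₀
              ≤ (cand (s₀.length + d + 1) (cfun R s₀ j₀ d)).sup (fun t => KfunAux R t j₀) :=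
                Finset.le_sup (f := fun t => KfunAux R t j₀) hcandmem
            _ ≤ cfun R s₀ j₀ (d + 1) := by rw [cfun]; exact le_max_right _ _
        have hfin := (hKb j hjge hjlt).trans hK2
        have hdd : j - s₀.length = d + 1 := by omega
        rwa [hdd]
  have hj1 : s₀.length ≤ j₀ - 1 := by omega
  have hj2 : j₀ - 1 < j₀ := by omega
  have hg := main (j₀ - 1) hj2 hj1
  have hfg : f (j₀ - 1) ≤ g (j₀ - 1) := hdom (j₀ - 1)
  have hgt := ffun_gt R s₀ (j₀ - 1) hj1
  have he : (j₀ - 1) + 1 = j₀ := by omega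
  rw [he] at hgt
  rw [← hf] at hgt
  omega
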